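/- Let D be the 2^{2n} × (2n+2) two-level design obtained as the binary image of the quaternary code generated by G = (v, I_n), where v ∈ Z_4^n has f_i occurrences of i for i=0,1,2,3. Set k_1 = f_1 + 2f_2 + f_3 + 1, k_2 = 2f_1 + 2f_3 + 2, and ρ = 2^{−⌊(f_1+f_3)/2⌋}. Then D has exactly one complete word of length k_2 (a set of k_2 columns with aliasing index 1) and exactly 2/ρ² partial words of length k_1 with aliasing index ρ; all other subsets of columns have aliasing index 0. -/

import Mathlib

open Finset

/-- The Gray map `φ : Z₄ → {−1,1}²`: φ(0)=(1,1), φ(1)=(1,−1), φ(2)=(−1,−1), φ(3)=(−1,1). -/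
def gray (x : ZMod 4) : Fin 2 → ℤ := fun c =>
  if c = 0 then (if x = 0 ∨ x = 1 then 1 else -1)
  else (if x = 0 ∨ x = 3 then 1 else -1)

/-- The `2^{2n} × (2n+2)` two-level design which is the Gray-map image of the quaternary
code generated by `G = (v, Iₙ)`.  Rows are indexed by `u : Fin n → ZMod 4`; the codeword is
`(∑ uᵢvᵢ, u₁, …, uₙ)` and each `Z₄`-coordinate gives two ±1 columns via the Gray map. -/
def Dv {n : ℕ} (v : Fin n → ZMod 4) :
    (Fin n → ZMod 4) → (Fin (n + 1) × Fin 2) → ℤ :=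
  fun u p => gray ((Fin.cons (∑ i, u i * v i) u : Fin (n + 1) → ZMod 4) p.1) p.2

/-- The J-characteristic `j(s; D) = ∑ᵢ ∏_{c ∈ s} D i c`. -/
def Jchar {I J : Type*} [Fintype I] (D : I → J → ℤ) (s : Finset J) : ℤ :=
  ∑ i, ∏ c ∈ s, D i c

/-- The aliasing index `ρ(s; D) = |j(s; D)| / N`. -/
def rho {I J : Type*} [Fintype I] (D : I → J → ℤ) (s : Finset J) : ℚ :=
  |(Jchar D s : ℚ)| / (Fintype.card I : ℚ)

/-- `freq v z` = number of occurrences of `z ∈ Z₄` in the vector `v`. -/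
def freq {n : ℕ} (v : Fin n → ZMod 4) (z : ZMod 4) : ℕ :=
  (Finset.univ.filter fun i => v i = z).card

/-- A design has projectivity (at least) `p` if every projection onto `p` columns contains a
complete `2^p` factorial. -/
def hasProjectivity {I J : Type*} (D : I → J → ℤ) (p : ℕ) : Prop :=
  ∀ s : Finset J, s.card = p → ∀ ε : J → ℤ, (∀ c, ε c = 1 ∨ ε c = -1) →
    ∃ i, ∀ c ∈ s, D i c = ε c

/-- `hasResolution D R` : the generalized resolution of `D` equals `R`, i.e.
`R = r + 1 − max_{|s| = r} ρ(s; D)` where `r` is the smallest size of a (nonempty) column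
subset with positive aliasing index. -/
def hasResolution {I J : Type*} [Fintype I] (D : I → J → ℤ) (R : ℚ) : Prop :=
  ∃ (r : ℕ) (m : ℚ),
    (∃ s : Finset J, s.card = r ∧ 0 < rho D s) ∧
    (∀ s : Finset J, s.Nonempty → s.card < r → rho D s = 0) ∧
    (∃ s : Finset J, s.card = r ∧ rho D s = m) ∧
    (∀ s : Finset J, s.card = r → rho D s ≤ m) ∧
    R = (r : ℚ) + 1 - m

/-- The generalized wordlength pattern `A_k(D) = ∑_{|s| = k} ρ(s; D)²`. -/
def Apattern {I J : Type*} [Fintype I] [Fintype J] (D : I → J → ℤ) (k : ℕ) : ℚ :=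
  ∑ s ∈ Finset.powersetCard k Finset.univ, (rho D s) ^ 2

/-- The half-fraction of `D` obtained by keeping the rows where the branching column `b`
equals `+1` and deleting column `b`. -/
def halfFraction {I J : Type*} (D : I → J → ℤ) (b : J) :
    {i : I // D i b = 1} → {c : J // c ≠ b} → ℤ :=
  fun i c => D i.1 c.1

/-- Sequential (lexicographic) comparison of generalized wordlength patterns:
`D` has no more aberration than `D'`. -/
def wlpLe {I I' J : Type*} [Fintype I] [Fintype I'] [Fintype J]
    (D : I → J → ℤ) (D' : I' → J → ℤ) : Prop :=
  ∀ k : ℕ, (∀ j < k, Apattern D j = Apattern D' j) → Apattern D k ≤ Apattern D' k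

/-! ### Auxiliary material -/

abbrev K := GaussianInt

def iota (x : ZMod 4) : K := (⟨0,1⟩ : K) ^ x.val
def eps (T : Finset (Fin 2)) (x : ZMod 4) : ℤ := ∏ c ∈ T, gray x c
def cc (T : Finset (Fin 2)) (a : ZMod 4) : K :=
  if T = ∅ then (if a = 0 then 2 else 0)
  else if T = {0} then (if a = 1 then ⟨1,-1⟩ else if a = 3 then ⟨1,1⟩ else 0)
  else if T = {1} then (if a = 1 then ⟨1,1⟩ else if a = 3 then ⟨1,-1⟩ else 0)
  else (if a = 2 then 2 else 0)
def B (w : ZMod 4) (T : Finset (Fin 2)) : K := ∑ x : ZMod 4, iota (w * x) * (eps T x : ℤ)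

lemma iota_add : ∀ x y : ZMod 4, iota (x + y) = iota x * iota y := by decide
lemma two_eps : ∀ (T : Finset (Fin 2)) (x : ZMod 4),
    (2 : K) * (eps T x : ℤ) = ∑ a : ZMod 4, cc T a * iota (a * x) := by decide

lemma iota_sum {γ : Type*} (s : Finset γ) (f : γ → ZMod 4) :
    iota (∑ i ∈ s, f i) = ∏ i ∈ s, iota (f i) := by
  induction s using Finset.cons_induction with
  | empty => simp [iota]
  | cons a s ha ih => rw [Finset.sum_cons, Finset.prod_cons, iota_add, ih]

variable {N : ℕ}
def pairSet (T : Fin N → Finset (Fin 2)) : Finset (Fin N × Fin 2) :=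
  (Finset.univ.sigma T).map (Equiv.sigmaEquivProd (Fin N) (Fin 2)).toEmbedding
lemma prod_pairSet {γ : Type*} [CommMonoid γ] (T : Fin N → Finset (Fin 2))
    (f : Fin N → Fin 2 → γ) : ∏ p ∈ pairSet T, f p.1 p.2 = ∏ j, ∏ c ∈ T j, f j c := by
  rw [pairSet, Finset.prod_map]
  exact Finset.prod_sigma _ _ _

theorem J_formula {n : ℕ} (v : Fin n → ZMod 4) (T : Fin (n+1) → Finset (Fin 2)) :
    (2 : K) * ((Jchar (Dv v) (pairSet T) : ℤ) : K)
      = ∑ a : ZMod 4, cc (T 0) a * ∏ i : Fin n, B (a * v i) (T i.succ) := by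
  have step1 : Jchar (Dv v) (pairSet T)
      = ∑ u : Fin n → ZMod 4,
          eps (T 0) (∑ i, u i * v i) * ∏ i : Fin n, eps (T i.succ) (u i) := by
    unfold Jchar Dv
    refine Finset.sum_congr rfl fun u _ => ?_
    have := prod_pairSet T
      (fun j c => gray ((Fin.cons (∑ i, u i * v i) u : Fin (n+1) → ZMod 4) j) c)
    rw [this, Fin.prod_univ_succ]
    simp [eps]
  rw [step1]
  push_cast
  rw [Finset.mul_sum]
  have step2 : ∀ u : Fin n → ZMod 4,
      (2:K) * ((eps (T 0) (∑ i, u i * v i) : K) * ∏ i : Fin n, (eps (T i.succ) (u i) : K))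
      = ∑ a : ZMod 4, cc (T 0) a *
          ∏ i : Fin n, iota (a * v i * u i) * (eps (T i.succ) (u i) : ℤ) := by
    intro u
    rw [← mul_assoc, two_eps, Finset.sum_mul]
    refine Finset.sum_congr rfl fun a _ => ?_
    rw [mul_assoc]
    congr 1
    have h1 : a * ∑ i, u i * v i = ∑ i, a * v i * u i := by
      rw [Finset.mul_sum]
      exact Finset.sum_congr rfl fun i _ => by ring
    rw [h1, iota_sum, ← Finset.prod_mul_distrib]
  rw [Finset.sum_congr rfl fun u _ => step2 u]
  rw [Finset.sum_comm]
  refine Finset.sum_congr rfl fun a _ => ?_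
  rw [← Finset.mul_sum]
  congr 1
  have h2 : (∑ u : Fin n → ZMod 4, ∏ i : Fin n,
      iota (a * v i * u i) * (eps (T i.succ) (u i) : ℤ))
    = ∏ i : Fin n, ∑ x : ZMod 4, iota (a * v i * x) * (eps (T i.succ) x : ℤ) := by
    rw [← Fintype.piFinset_univ, Finset.prod_univ_sum]
  rw [h2]
  exact Finset.prod_congr rfl fun i _ => rfl
def W0 (k : ℕ) : K := ⟨1,1⟩^k + ⟨1,-1⟩^k
def Wg (α β : ℕ) : K := ⟨1,1⟩^α * ⟨1,-1⟩^β + ⟨1,-1⟩^α * ⟨1,1⟩^β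

lemma Wg_zero (β : ℕ) : Wg 0 β = W0 β := by simp [Wg, W0]; ring
lemma Wg_symm (α β : ℕ) : Wg α β = Wg β α := by simp [Wg]; ring
lemma Wg_succ (a b : ℕ) : Wg (a+1) (b+1) = 2 * Wg a b := by
  have h : (⟨1,1⟩ : K) * ⟨1,-1⟩ = 2 := by decide
  simp only [Wg, pow_succ]
  rw [show (⟨1,1⟩:K)^a * ⟨1,1⟩ * (⟨1,-1⟩^b * ⟨1,-1⟩) = (⟨1,1⟩*⟨1,-1⟩) * (⟨1,1⟩^a * ⟨1,-1⟩^b) by ring,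
    show (⟨1,-1⟩:K)^a * ⟨1,-1⟩ * (⟨1,1⟩^b * ⟨1,1⟩) = (⟨1,1⟩*⟨1,-1⟩) * (⟨1,-1⟩^a * ⟨1,1⟩^b) by ring,
    h, mul_add]

lemma W0_add4 (k : ℕ) : W0 (k+4) = -4 * W0 k := by
  have h1 : (⟨1,1⟩ : K)^4 = -4 := by decide
  have h2 : (⟨1,-1⟩ : K)^4 = -4 := by decide
  simp only [W0, pow_add, h1, h2]; ring

lemma even_zmod4 (β : ℕ) (h : Even β) : (β : ZMod 4) = 0 ∨ (β : ZMod 4) = 2 := by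
  obtain ⟨t, ht⟩ := h
  subst ht
  push_cast
  have : ∀ z : ZMod 4, z + z = 0 ∨ z + z = 2 := by decide
  exact this _

lemma W0_eval (k : ℕ) :
    (Odd k → ∃ ε : ℤ, ε^2 = 1 ∧ W0 k = ((ε * 2^((k+1)/2) : ℤ) : K)) ∧
    ((k : ZMod 4) = 0 → ∃ ε : ℤ, ε^2 = 1 ∧ W0 k = ((ε * 2^(k/2+1) : ℤ) : K)) ∧
    ((k : ZMod 4) = 2 → W0 k = 0) := by
  induction k using Nat.strong_induction_on with
  | _ k ih =>
    match k, ih with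
    | 0, _ => exact ⟨by simp [Nat.odd_iff], fun _ => ⟨1, by norm_num, by decide⟩,
        by decide⟩
    | 1, _ => exact ⟨fun _ => ⟨1, by norm_num, by decide⟩,
        fun h => absurd h (by decide), fun h => absurd h (by decide)⟩
    | 2, _ => exact ⟨by simp [Nat.odd_iff], fun h => absurd h (by decide), fun _ => by decide⟩
    | 3, _ => exact ⟨fun _ => ⟨-1, by norm_num, by decide⟩,
        fun h => absurd h (by decide), fun h => absurd h (by decide)⟩
    | (j+4), ih =>
      obtain ⟨h1, h2, h3⟩ := ih j (by omega)
      have hc : ((j+4 : ℕ) : ZMod 4) = (j : ZMod 4) := by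
        push_cast; simp [show (4 : ZMod 4) = 0 by decide]
      refine ⟨?_, ?_, ?_⟩
      · intro ho
        obtain ⟨ε, hε, hW⟩ := h1 (by rcases ho with ⟨t,ht⟩; exact ⟨t-2, by omega⟩)
        refine ⟨-ε, by rw [neg_pow]; simp [hε], ?_⟩
        rw [W0_add4, hW, show (j+4+1)/2 = (j+1)/2 + 2 by omega]
        push_cast; ring
      · intro hz
        obtain ⟨ε, hε, hW⟩ := h2 (by rwa [hc] at hz)
        refine ⟨-ε, by rw [neg_pow]; simp [hε], ?_⟩
        rw [W0_add4, hW, show (j+4)/2+1 = (j/2+1) + 2 by omega]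
        push_cast; ring
      · intro hz
        rw [W0_add4, h3 (by rwa [hc] at hz), mul_zero]

lemma Wg_eval (α β : ℕ) :
    (Odd (α+β) → ∃ ε : ℤ, ε^2 = 1 ∧ Wg α β = ((ε * 2^((α+β+1)/2) : ℤ) : K)) ∧
    ((α : ZMod 4) = (β : ZMod 4) → ∃ ε : ℤ, ε^2 = 1 ∧ Wg α β = ((ε * 2^((α+β)/2+1) : ℤ) : K)) ∧
    (Even (α+β) → (α : ZMod 4) ≠ (β : ZMod 4) → Wg α β = 0) := by
  have aux : ∀ a b : ℕ, a ≤ b →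
      (Odd (a+b) → ∃ ε : ℤ, ε^2 = 1 ∧ Wg a b = ((ε * 2^((a+b+1)/2) : ℤ) : K)) ∧
      ((a : ZMod 4) = (b : ZMod 4) → ∃ ε : ℤ, ε^2 = 1 ∧ Wg a b = ((ε * 2^((a+b)/2+1) : ℤ) : K)) ∧
      (Even (a+b) → (a : ZMod 4) ≠ (b : ZMod 4) → Wg a b = 0) := by
    intro a
    induction a with
    | zero =>
      intro b _
      obtain ⟨h1, h2, h3⟩ := W0_eval b
      refine ⟨?_, ?_, ?_⟩
      · intro ho; obtain ⟨ε, hε, hW⟩ := h1 (by simpa using ho)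
        exact ⟨ε, hε, by rw [Wg_zero]; simpa using hW⟩
      · intro hz; obtain ⟨ε, hε, hW⟩ := h2 (by simpa using hz.symm)
        exact ⟨ε, hε, by rw [Wg_zero]; simpa using hW⟩
      · intro he hz
        rw [Wg_zero]
        apply h3
        rcases even_zmod4 b (by simpa using he) with h | h
        · exact absurd (by simp [h]) hz
        · exact h
    | succ a iha =>
      intro b hab
      obtain ⟨b', rfl⟩ : ∃ b', b = b' + 1 := ⟨b - 1, by omega⟩
      obtain ⟨h1, h2, h3⟩ := iha b' (by omega)
      have hcast : ((a+1 : ℕ) : ZMod 4) = ((b'+1 : ℕ) : ZMod 4) ↔ (a : ZMod 4) = (b' : ZMod 4) := by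
        push_cast; exact add_left_inj 1
      refine ⟨?_, ?_, ?_⟩
      · intro ho
        obtain ⟨ε, hε, hW⟩ := h1 (by rcases ho with ⟨t,ht⟩; exact ⟨t-1, by omega⟩)
        refine ⟨ε, hε, ?_⟩
        rw [Wg_succ, hW, show (a+1+(b'+1)+1)/2 = (a+b'+1)/2 + 1 by omega]
        push_cast; ring
      · intro hz
        obtain ⟨ε, hε, hW⟩ := h2 (hcast.mp hz)
        refine ⟨ε, hε, ?_⟩
        rw [Wg_succ, hW, show (a+1+(b'+1))/2+1 = ((a+b')/2+1) + 1 by omega]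
        push_cast; ring
      · intro he hz
        rw [Wg_succ, h3 (by rcases he with ⟨t,ht⟩; exact ⟨t-1, by omega⟩)
          (fun h => hz (hcast.mpr h)), mul_zero]
  rcases le_total α β with h | h
  · exact aux α β h
  · obtain ⟨h1, h2, h3⟩ := aux β α h
    refine ⟨?_, ?_, ?_⟩
    · intro ho
      obtain ⟨ε, hε, hW⟩ := h1 (by rwa [Nat.add_comm] at ho)
      exact ⟨ε, hε, by rw [Wg_symm, hW, Nat.add_comm β α]⟩
    · intro hz
      obtain ⟨ε, hε, hW⟩ := h2 hz.symm
      exact ⟨ε, hε, by rw [Wg_symm, hW, Nat.add_comm β α]⟩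
    · intro he hz
      rw [Wg_symm]
      exact h3 (by rwa [Nat.add_comm] at he) (Ne.symm hz)

-- cases helpers
lemma zmod4_cases : ∀ z : ZMod 4, z = 0 ∨ z = 1 ∨ z = 2 ∨ z = 3 := by decide
lemma finset2_cases : ∀ T : Finset (Fin 2), T = ∅ ∨ T = {0} ∨ T = {1} ∨ T = {0,1} := by decide
lemma fin2_cases : ∀ c : Fin 2, c = 0 ∨ c = 1 := by decide

lemma sum_zmod4 (f : ZMod 4 → K) : ∑ a : ZMod 4, f a = f 0 + f 1 + f 2 + f 3 :=
  Fin.sum_univ_four f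

lemma intK_inj {x y : ℤ} (h : (x : K) = y) : x = y := by
  simpa using congrArg Zsqrtd.re h

-- the shape of a matched column-pair subset
def shape (w : ZMod 4) (p : Prop) [Decidable p] : Finset (Fin 2) :=
  if w = 0 then ∅ else if w = 2 then {0,1}
  else if w = 1 then (if p then {0} else {1}) else (if p then {1} else {0})

lemma shape_congr_true (w : ZMod 4) (p : Prop) [Decidable p] (hp : p) :
    shape w p = shape w True := by simp [shape, hp]
lemma shape_congr_false (w : ZMod 4) (p : Prop) [Decidable p] (hp : ¬p) :
    shape w p = shape w False := by simp [shape, hp]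

-- B-values
lemma B0val : ∀ T : Finset (Fin 2), B 0 T = if T = ∅ then 4 else 0 := by decide
lemma B2val : ∀ (w : ZMod 4) (T : Finset (Fin 2)),
    B (2*w) T = if T = (if w = 1 ∨ w = 3 then ({0,1} : Finset (Fin 2)) else ∅) then 4 else 0 := by
  decide
lemma Bshape1 (w : ZMod 4) (p : Prop) [Decidable p] :
    B w (shape w p) = if w = 1 ∨ w = 3 then (if p then ⟨2,2⟩ else ⟨2,-2⟩) else 4 := by
  by_cases hp : p
  · rw [shape_congr_true _ _ hp]; simp only [hp, if_true]; revert w; decide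
  · rw [shape_congr_false _ _ hp]; simp only [hp, if_false]; revert w; decide
lemma Bshape3 (w : ZMod 4) (p : Prop) [Decidable p] :
    B (3*w) (shape w p) = if w = 1 ∨ w = 3 then (if p then ⟨2,-2⟩ else ⟨2,2⟩) else 4 := by
  by_cases hp : p
  · rw [shape_congr_true _ _ hp]; simp only [hp, if_true]; revert w; decide
  · rw [shape_congr_false _ _ hp]; simp only [hp, if_false]; revert w; decide
lemma Bvanish : ∀ (w : ZMod 4) (T : Finset (Fin 2)), T ≠ shape w True → T ≠ shape w False →
    B (1*w) T = 0 ∧ B (3*w) T = 0 := by decide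

lemma shape_card (w : ZMod 4) (p : Prop) [Decidable p] :
    (shape w p).card = if w = 2 then 2 else if w = 1 ∨ w = 3 then 1 else 0 := by
  by_cases hp : p <;> rw [(by simp [shape, hp] :
    shape w p = shape w (if hp : p then True else False))] <;> revert w <;> simp [hp] <;> decide

variable {N : ℕ}
lemma mem_toSet {T : Fin N → Finset (Fin 2)} {p : Fin N × Fin 2} :
    p ∈ pairSet T ↔ p.2 ∈ T p.1 := by
  simp only [pairSet, mem_map_equiv, mem_sigma, mem_univ, true_and]
  rfl

lemma toSet_inj {T T' : Fin N → Finset (Fin 2)} (h : pairSet T = pairSet T') : T = T' := by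
  funext j; ext c
  have := Finset.ext_iff.mp h (j, c)
  simpa [mem_toSet] using this

lemma card_toSet (T : Fin N → Finset (Fin 2)) : (pairSet T).card = ∑ j, (T j).card := by
  simp [pairSet, Finset.card_sigma]

def fib (s : Finset (Fin N × Fin 2)) : Fin N → Finset (Fin 2) :=
  fun j => (s.filter (fun p => p.1 = j)).image Prod.snd

lemma toSet_fib (s : Finset (Fin N × Fin 2)) : pairSet (fib s) = s := by
  ext p
  simp only [mem_toSet, fib, mem_image, mem_filter]
  constructor
  · rintro ⟨q, ⟨hq, h1⟩, h2⟩
    rwa [show p = q from Prod.ext h1.symm h2.symm]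
  · exact fun h => ⟨p, ⟨h, rfl⟩, rfl⟩

lemma toSet_empty_iff (T : Fin N → Finset (Fin 2)) : pairSet T = ∅ ↔ ∀ j, T j = ∅ := by
  simp only [Finset.eq_empty_iff_forall_notMem]
  constructor
  · intro h j c hc; exact h (j, c) (mem_toSet.mpr hc)
  · intro h p hp; exact h p.1 p.2 (mem_toSet.mp hp)

lemma card_parity_swap {ι : Type*} [DecidableEq ι] (M : Finset ι) (hM : M.Nonempty) :
    ((M.powerset.filter (fun A => A.card % 2 = 0)).card)
      = ((M.powerset.filter (fun A => A.card % 2 = 1)).card) := by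
  obtain ⟨x, hx⟩ := hM
  apply Finset.card_bij' (fun A _ => if x ∈ A then A.erase x else insert x A)
    (fun A _ => if x ∈ A then A.erase x else insert x A)
  · intro A _
    by_cases h : x ∈ A
    · rw [if_pos h, if_neg (Finset.notMem_erase x A), Finset.insert_erase h]
    · rw [if_neg h, if_pos (Finset.mem_insert_self x A), Finset.erase_insert h]
  · intro A _
    by_cases h : x ∈ A
    · rw [if_pos h, if_neg (Finset.notMem_erase x A), Finset.insert_erase h]
    · rw [if_neg h, if_pos (Finset.mem_insert_self x A), Finset.erase_insert h]
  · intro A hA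
    simp only [Finset.mem_filter, Finset.mem_powerset] at hA ⊢
    by_cases h : x ∈ A
    · rw [if_pos h]
      have hc : 0 < A.card := Finset.card_pos.mpr ⟨x, h⟩
      refine ⟨(Finset.erase_subset _ _).trans hA.1, ?_⟩
      rw [Finset.card_erase_of_mem h]; omega
    · rw [if_neg h]
      refine ⟨Finset.insert_subset hx hA.1, ?_⟩
      rw [Finset.card_insert_of_notMem h]; omega
  · intro A hA
    simp only [Finset.mem_filter, Finset.mem_powerset] at hA ⊢
    by_cases h : x ∈ A
    · rw [if_pos h]
      refine ⟨(Finset.erase_subset _ _).trans hA.1, ?_⟩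
      rw [Finset.card_erase_of_mem h]; omega
    · rw [if_neg h]
      refine ⟨Finset.insert_subset hx hA.1, ?_⟩
      rw [Finset.card_insert_of_notMem h]; omega

lemma count_parity {ι : Type*} [DecidableEq ι] (M : Finset ι) (hM : M.Nonempty) (r : ℕ) :
    ((M.powerset.filter (fun A => A.card % 2 = r % 2)).card) = 2^(M.card - 1) := by
  have hsplit := Finset.card_filter_add_card_filter_not
    (s := M.powerset) (p := fun A => A.card % 2 = 0)
  have hneg : M.powerset.filter (fun A => ¬ A.card % 2 = 0)
      = M.powerset.filter (fun A => A.card % 2 = 1) := by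
    apply Finset.filter_congr; intro A _; omega
  rw [hneg, Finset.card_powerset] at hsplit
  have heq := card_parity_swap M hM
  have hM1 : 1 ≤ M.card := Finset.card_pos.mpr hM
  have hpow : 2^M.card = 2 * 2^(M.card - 1) := by
    rw [← pow_succ']; congr 1; omega
  rcases Nat.mod_two_eq_zero_or_one r with hr | hr <;> rw [hr] <;> omega

lemma two_mul_zmod4 (a b : ℕ) : 2 * (a : ZMod 4) = 2 * (b : ZMod 4) ↔ a % 2 = b % 2 := by
  have key : ∀ c : ℕ, 2 * (c : ZMod 4) = 2 * ((c % 2 : ℕ) : ZMod 4) := by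
    intro c
    conv_lhs => rw [show c = 2*(c/2) + c%2 by omega]
    push_cast
    rw [show (2:ZMod 4) * (2 * (c/2 : ℕ) + (c % 2 : ℕ)) = 4 * (c/2 : ℕ) + 2 * (c%2 : ℕ) by ring,
      show (4:ZMod 4) = 0 by decide, zero_mul, zero_add]
  constructor
  · intro h
    rw [key a, key b] at h
    rcases Nat.mod_two_eq_zero_or_one a with ha | ha <;>
      rcases Nat.mod_two_eq_zero_or_one b with hb | hb <;>
      rw [ha, hb] at h ⊢ <;> first | rfl | (exfalso; revert h; decide)
  · intro h
    rw [key a, key b, h]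

section Design
variable {n : ℕ} (v : Fin n → ZMod 4)

def Mv : Finset (Fin n) := univ.filter (fun i => v i = 1 ∨ v i = 3)

def Tc : Fin (n+1) → Finset (Fin 2) :=
  Fin.cons {0,1} (fun i => if v i = 1 ∨ v i = 3 then ({0,1} : Finset (Fin 2)) else ∅)

def Tof (c0 : Fin 2) (A : Finset (Fin n)) : Fin (n+1) → Finset (Fin 2) :=
  Fin.cons {c0} (fun i => shape (v i) (i ∈ A))

-- product evaluation for matched shapes
lemma prod_shape (A : Finset (Fin n)) (hA : A ⊆ Mv v) (x y : K)
    (F : Fin n → K)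
    (hval : ∀ i, F i = if v i = 1 ∨ v i = 3 then (if i ∈ A then x else y) else 4) :
    ∏ i, F i = 4^(n - (Mv v).card) * (x^A.card * y^((Mv v).card - A.card)) := by
  rw [Finset.prod_congr rfl (fun i _ => hval i), Finset.prod_ite]
  have h1 : univ.filter (fun i => ¬(v i = 1 ∨ v i = 3)) = univ \ Mv v := by
    ext i; simp [Mv]
  have h2 : (univ.filter (fun i => v i = 1 ∨ v i = 3)) = Mv v := rfl
  rw [h1, h2, Finset.prod_const, Finset.card_sdiff_of_subset (Finset.subset_univ _), Finset.card_univ,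
    Fintype.card_fin, Finset.prod_ite, Finset.prod_const, Finset.prod_const]
  have h3 : (Mv v).filter (fun i => i ∈ A) = A := by
    ext i; simp only [Finset.mem_filter]
    exact ⟨fun h => h.2, fun h => ⟨hA h, h⟩⟩
  have h4 : ((Mv v).filter (fun i => i ∉ A)).card = (Mv v).card - A.card := by
    rw [(by rw [Finset.sdiff_eq_filter] : (Mv v).filter (fun i => i ∉ A) = Mv v \ A),
      Finset.card_sdiff_of_subset hA]
  rw [h3, h4]
  ring

lemma J_partial (c0 : Fin 2) (A : Finset (Fin n)) (hA : A ⊆ Mv v) :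
    (2 : K) * ((Jchar (Dv v) (pairSet (Tof v c0 A)) : ℤ) : K)
      = 4^(n - (Mv v).card) * 2^((Mv v).card) *
          Wg (A.card + c0.val) ((Mv v).card + 1 - (A.card + c0.val)) := by
  have hcard : A.card ≤ (Mv v).card := Finset.card_le_card hA
  rw [J_formula, sum_zmod4]
  have h0 : Tof v c0 A 0 = {c0} := rfl
  have hsucc : ∀ i : Fin n, Tof v c0 A i.succ = shape (v i) (i ∈ A) := fun i => by
    rw [Tof, Fin.cons_succ]
  have hP1 : ∏ i, B (1 * v i) (Tof v c0 A i.succ)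
      = 4^(n - (Mv v).card) * (⟨2,2⟩^A.card * ⟨2,-2⟩^((Mv v).card - A.card)) := by
    refine prod_shape v A hA _ _ _ fun i => ?_
    rw [hsucc i, one_mul, Bshape1]
  have hP3 : ∏ i, B (3 * v i) (Tof v c0 A i.succ)
      = 4^(n - (Mv v).card) * (⟨2,-2⟩^A.card * ⟨2,2⟩^((Mv v).card - A.card)) := by
    refine prod_shape v A hA _ _ _ fun i => ?_
    rw [hsucc i, Bshape3]
  have hP0 : ∀ a : ZMod 4, cc (Tof v c0 A 0) a * ∏ i, B (a * v i) (Tof v c0 A i.succ)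
      = cc {c0} a * ∏ i, B (a * v i) (Tof v c0 A i.succ) := fun a => by rw [h0]
  rw [hP0, hP0, hP0, hP0]
  obtain ⟨k, hk⟩ : ∃ k, (Mv v).card = A.card + k := ⟨(Mv v).card - A.card, by omega⟩
  rcases fin2_cases c0 with rfl | rfl
  · have hcc : cc {(0 : Fin 2)} 0 = 0 ∧ cc {(0 : Fin 2)} 1 = ⟨1,-1⟩ ∧
        cc {(0 : Fin 2)} 2 = 0 ∧ cc {(0 : Fin 2)} 3 = ⟨1,1⟩ := by decide
    rw [hcc.1, hcc.2.1, hcc.2.2.1, hcc.2.2.2, hP1, hP3]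
    rw [show (Mv v).card + 1 - (A.card + (0:Fin 2).val) = k + 1 by omega, hk,
      show A.card + k - A.card = k by omega]
    show (0:K) * _ + _ + (0:K) * _ + _ = _
    rw [Wg]
    have e22 : (⟨2,2⟩ : K) = 2 * ⟨1,1⟩ := by decide
    have e22' : (⟨2,-2⟩ : K) = 2 * ⟨1,-1⟩ := by decide
    rw [e22, e22', show (0:Fin 2).val = 0 from rfl]
    ring
  · have hcc : cc {(1 : Fin 2)} 0 = 0 ∧ cc {(1 : Fin 2)} 1 = ⟨1,1⟩ ∧
        cc {(1 : Fin 2)} 2 = 0 ∧ cc {(1 : Fin 2)} 3 = ⟨1,-1⟩ := by decide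
    rw [hcc.1, hcc.2.1, hcc.2.2.1, hcc.2.2.2, hP1, hP3]
    rw [show (Mv v).card + 1 - (A.card + (1:Fin 2).val) = k by omega, hk,
      show A.card + k - A.card = k by omega]
    show (0:K) * _ + _ + (0:K) * _ + _ = _
    rw [Wg]
    have e22 : (⟨2,2⟩ : K) = 2 * ⟨1,1⟩ := by decide
    have e22' : (⟨2,-2⟩ : K) = 2 * ⟨1,-1⟩ := by decide
    rw [e22, e22', show (1:Fin 2).val = 1 from rfl]
    ring

lemma J_complete : (Jchar (Dv v) (pairSet (Tc v)) : ℤ) = 4^n := by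
  have h := J_formula v (Tc v)
  rw [sum_zmod4] at h
  have h0 : Tc v 0 = {0,1} := rfl
  have hcc : cc ({0,1} : Finset (Fin 2)) 0 = 0 ∧ cc ({0,1} : Finset (Fin 2)) 1 = 0 ∧
      cc ({0,1} : Finset (Fin 2)) 2 = 2 ∧ cc ({0,1} : Finset (Fin 2)) 3 = 0 := by decide
  rw [h0, hcc.1, hcc.2.1, hcc.2.2.1, hcc.2.2.2] at h
  have hprod : ∏ i, B (2 * v i) (Tc v i.succ) = 4^n := by
    have : ∀ i : Fin n, B (2 * v i) (Tc v i.succ) = 4 := fun i => by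
      rw [Tc, Fin.cons_succ, B2val]
      by_cases hv : v i = 1 ∨ v i = 3 <;> simp [hv]
    rw [Finset.prod_congr rfl fun i _ => this i, Finset.prod_const, Finset.card_univ,
      Fintype.card_fin]
  rw [hprod] at h
  have h' : (2:K) * ((Jchar (Dv v) (pairSet (Tc v)) : ℤ) : K) = 2 * 4^n := by rw [h]; ring
  have h2 : (2 * Jchar (Dv v) (pairSet (Tc v)) : ℤ) = 2 * 4^n :=
    intK_inj (by push_cast; exact h')
  omega

def condE (c0 : Fin 2) (A : Finset (Fin n)) : Prop :=
  Even (Mv v).card ∨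
    2 * ((A.card + c0.val : ℕ) : ZMod 4) = (((Mv v).card + 1 : ℕ) : ZMod 4)

instance (c0 : Fin 2) (A : Finset (Fin n)) : Decidable (condE v c0 A) := by
  unfold condE; exact inferInstance

def Ev : Finset (Fin 2 × Finset (Fin n)) :=
  ({0} ×ˢ ((Mv v).powerset.filter (condE v 0))) ∪
    ({1} ×ˢ ((Mv v).powerset.filter (condE v 1)))

lemma mem_Ev (c0 : Fin 2) (A : Finset (Fin n)) :
    (c0, A) ∈ Ev v ↔ (A ⊆ Mv v ∧ condE v c0 A) := by
  rcases fin2_cases c0 with rfl | rfl <;>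
    simp [Ev, Finset.mem_union, Finset.mem_product, Finset.mem_filter, Finset.mem_powerset,
      (by decide : ¬ (0:Fin 2) = 1), (by decide : ¬ (1:Fin 2) = 0)]

lemma alpha_iff (m α : ℕ) (h : α ≤ m + 1) :
    ((α : ZMod 4) = ((m+1-α : ℕ) : ZMod 4)) ↔ 2*(α : ZMod 4) = ((m+1 : ℕ) : ZMod 4) := by
  rw [Nat.cast_sub h]
  constructor
  · intro h'
    rw [two_mul]
    nth_rewrite 2 [h']
    rw [add_sub_cancel]
  · intro h'
    rw [eq_sub_iff_add_eq, ← two_mul]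
    exact h'

lemma card_Ev : (Ev v).card = 2 * 4^((Mv v).card / 2) := by
  have hdisj : Disjoint ({(0:Fin 2)} ×ˢ ((Mv v).powerset.filter (condE v 0)))
      ({(1:Fin 2)} ×ˢ ((Mv v).powerset.filter (condE v 1))) := by
    rw [Finset.disjoint_left]
    intro p hp hq
    rw [Finset.mem_product, Finset.mem_singleton] at hp hq
    rw [hp.1] at hq
    exact absurd hq.1 (by decide)
  rw [Ev, Finset.card_union_of_disjoint hdisj, Finset.card_product, Finset.card_product]
  simp only [Finset.card_singleton, one_mul]
  by_cases hm : Even (Mv v).card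
  · have htriv : ∀ c0 : Fin 2, (Mv v).powerset.filter (condE v c0) = (Mv v).powerset := by
      intro c0
      apply Finset.filter_true_of_mem
      intro A _
      exact Or.inl hm
    rw [htriv 0, htriv 1, Finset.card_powerset]
    obtain ⟨t, ht⟩ := hm
    rw [ht, show t + t = 2 * t by ring, show (4:ℕ) = 2^2 by norm_num, ← pow_mul,
      show 2*t/2 = t by omega]
    ring
  · have hodd : Odd (Mv v).card := Nat.odd_iff.mpr (by
      rcases Nat.even_or_odd (Mv v).card with h | h
      · exact absurd h hm
      · exact Nat.odd_iff.mp h)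
    have hM1 : 1 ≤ (Mv v).card := by
      rcases hodd with ⟨t, ht⟩; omega
    have hMne : (Mv v).Nonempty := Finset.card_pos.mp (by omega)
    have hcast : (((Mv v).card + 1 : ℕ) : ZMod 4)
        = 2 * ((((Mv v).card + 1)/2 : ℕ) : ZMod 4) := by
      obtain ⟨t, ht⟩ := hodd
      rw [ht, show 2*t+1+1 = 2*(t+1) by ring, show (2*(t+1))/2 = t+1 by omega]
      push_cast
      ring
    have hcount : ∀ c0 : Fin 2, ((Mv v).powerset.filter (condE v c0)).card
        = 2^((Mv v).card - 1) := by
      intro c0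
      have heq : (Mv v).powerset.filter (condE v c0)
          = (Mv v).powerset.filter
              (fun A => A.card % 2 = (((Mv v).card + 1)/2 + c0.val) % 2) := by
        apply Finset.filter_congr
        intro A _
        unfold condE
        rw [or_iff_right hm, hcast, two_mul_zmod4]
        omega
      rw [heq]
      exact count_parity _ hMne _
    rw [hcount 0, hcount 1]
    rcases hodd with ⟨t, ht⟩
    rw [ht, show 2*t+1-1 = 2*t by omega, show (2*t+1)/2 = t by omega,
      show (4:ℕ) = 2^2 by norm_num, ← pow_mul]
    ring

lemma shape_inj_odd (w : ZMod 4) (hw : w = 1 ∨ w = 3) (p q : Prop) [Decidable p] [Decidable q]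
    (h : shape w p = shape w q) : p ↔ q := by
  by_cases hp : p <;> by_cases hq : q
  · exact iff_of_true hp hq
  · rw [shape_congr_true _ _ hp, shape_congr_false _ _ hq] at h
    exfalso
    rcases hw with rfl | rfl
    · exact absurd h (by decide)
    · exact absurd h (by decide)
  · rw [shape_congr_false _ _ hp, shape_congr_true _ _ hq] at h
    exfalso
    rcases hw with rfl | rfl
    · exact absurd h (by decide)
    · exact absurd h (by decide)
  · exact iff_of_false hp hq

lemma Tof_inj {c0 c0' : Fin 2} {A A' : Finset (Fin n)} (hA : A ⊆ Mv v) (hA' : A' ⊆ Mv v)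
    (h : Tof v c0 A = Tof v c0' A') : c0 = c0' ∧ A = A' := by
  have h0 : ({c0} : Finset (Fin 2)) = {c0'} := by
    have := congrFun h 0
    rwa [Tof, Tof, Fin.cons_zero, Fin.cons_zero] at this
  refine ⟨Finset.singleton_inj.mp h0, ?_⟩
  ext i
  have hi : shape (v i) (i ∈ A) = shape (v i) (i ∈ A') := by
    have := congrFun h i.succ
    rwa [Tof, Tof, Fin.cons_succ, Fin.cons_succ] at this
  by_cases hm : i ∈ Mv v
  · have hw : v i = 1 ∨ v i = 3 := (Finset.mem_filter.mp hm).2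
    exact shape_inj_odd (v i) hw _ _ hi
  · have h1 : i ∉ A := fun hc => hm (hA hc)
    have h2 : i ∉ A' := fun hc => hm (hA' hc)
    exact iff_of_false h1 h2

lemma freq_13 : (Mv v).card = freq v 1 + freq v 3 := by
  have : Mv v = (univ.filter (fun i => v i = 1)) ∪ (univ.filter (fun i => v i = 3)) := by
    rw [Mv, Finset.filter_or]
  rw [this, Finset.card_union_of_disjoint, freq, freq]
  rw [Finset.disjoint_left]
  intro i hi1 hi3
  rw [Finset.mem_filter] at hi1 hi3
  rw [hi1.2] at hi3
  exact absurd hi3.2 (by decide)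

lemma card_word1 (c0 : Fin 2) (A : Finset (Fin n)) :
    (pairSet (Tof v c0 A)).card = (Mv v).card + 2 * freq v 2 + 1 := by
  rw [card_toSet, Fin.sum_univ_succ]
  have h0 : (Tof v c0 A 0).card = 1 := by rw [Tof, Fin.cons_zero, Finset.card_singleton]
  have hsucc : ∀ i : Fin n, (Tof v c0 A i.succ).card
      = (if v i = 2 then 2 else 0) + (if v i = 1 ∨ v i = 3 then 1 else 0) := by
    intro i
    rw [Tof, Fin.cons_succ, shape_card]
    have : ∀ z : ZMod 4, (if z = 2 then 2 else if z = 1 ∨ z = 3 then 1 else 0)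
        = (if z = 2 then 2 else 0) + (if z = 1 ∨ z = 3 then 1 else 0) := by decide
    exact this (v i)
  rw [h0, Finset.sum_congr rfl (fun i _ => hsucc i), Finset.sum_add_distrib]
  rw [← Finset.sum_filter, ← Finset.sum_filter, Finset.sum_const, Finset.sum_const]
  rw [freq, Mv]
  simp only [smul_eq_mul, mul_one, mul_comm]
  omega

lemma card_word2 : (pairSet (Tc v)).card = 2 * (Mv v).card + 2 := by
  rw [card_toSet, Fin.sum_univ_succ]
  have h0 : (Tc v 0).card = 2 := by rw [Tc, Fin.cons_zero]; decide
  have hsucc : ∀ i : Fin n, (Tc v i.succ).card = if v i = 1 ∨ v i = 3 then 2 else 0 := by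
    intro i
    rw [Tc, Fin.cons_succ]
    by_cases hv : v i = 1 ∨ v i = 3 <;> simp [hv]
  rw [h0, Finset.sum_congr rfl (fun i _ => hsucc i), ← Finset.sum_filter, Finset.sum_const]
  rw [Mv]
  simp only [smul_eq_mul]
  omega

lemma rho_formula (s : Finset (Fin (n+1) × Fin 2)) :
    rho (Dv v) s = |(Jchar (Dv v) s : ℚ)| / 4^n := by
  rw [rho, Fintype.card_fun, ZMod.card, Fintype.card_fin]
  push_cast
  rfl

lemma rho_word2 : rho (Dv v) (pairSet (Tc v)) = 1 := by
  rw [rho_formula, J_complete]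
  rw [abs_of_nonneg (by positivity)]
  push_cast
  exact div_self (by positivity)

lemma mv_le : (Mv v).card ≤ n := by
  calc (Mv v).card ≤ (univ : Finset (Fin n)).card := Finset.card_filter_le _ _
  _ = n := by rw [Finset.card_univ, Fintype.card_fin]

lemma rho_word1 (c0 : Fin 2) (A : Finset (Fin n)) (hA : A ⊆ Mv v) (hcond : condE v c0 A) :
    rho (Dv v) (pairSet (Tof v c0 A)) = 1 / 2^((Mv v).card / 2) := by
  have hcard : A.card ≤ (Mv v).card := Finset.card_le_card hA
  have hc0 : c0.val ≤ 1 := by omega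
  set m := (Mv v).card with hmdef
  set α := A.card + c0.val with hαdef
  have hα : α ≤ m + 1 := by omega
  have hJK := J_partial v c0 A hA
  have key : ∃ (ε : ℤ) (e : ℕ), ε^2 = 1 ∧ e + m/2 = 2*m ∧
      (Jchar (Dv v) (pairSet (Tof v c0 A)) : ℤ) = ε * (4^(n-m) * 2^e) := by
    by_cases hm : Even m
    · obtain ⟨εw, hεw, hW⟩ := (Wg_eval α (m+1-α)).1 (by
        rw [show α + (m+1-α) = m+1 by omega]
        exact Even.add_one hm)
      refine ⟨εw, m + m/2, hεw, by rcases hm with ⟨t, ht⟩; omega, ?_⟩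
      have hexp : (α + (m+1-α) + 1)/2 = m/2 + 1 := by
        rcases hm with ⟨t, ht⟩; omega
      rw [hW, hexp] at hJK
      have hK : (2:K) * ((Jchar (Dv v) (pairSet (Tof v c0 A)) : ℤ) : K)
          = ((2 * (εw * (4^(n-m) * 2^(m + m/2))) : ℤ) : K) := by
        rw [hJK]
        push_cast
        rw [show m + m/2 = m + (m/2) by rfl, pow_add, pow_add, pow_succ]
        ring
      have := intK_inj (x := 2 * Jchar (Dv v) (pairSet (Tof v c0 A)))
        (y := 2 * (εw * (4^(n-m) * 2^(m + m/2)))) (by push_cast at hK ⊢; exact hK)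
      omega
    · have hzm : 2 * ((α : ℕ) : ZMod 4) = ((m+1 : ℕ) : ZMod 4) := by
        rcases hcond with h | h
        · exact absurd h hm
        · exact h
      obtain ⟨εw, hεw, hW⟩ := (Wg_eval α (m+1-α)).2.1 ((alpha_iff m α hα).mpr hzm)
      refine ⟨εw, m + (m+1)/2, hεw, by have := Nat.not_even_iff.mp hm; omega, ?_⟩
      have hexp : (α + (m+1-α))/2 + 1 = (m+1)/2 + 1 := by omega
      rw [hW, hexp] at hJK
      have hK : (2:K) * ((Jchar (Dv v) (pairSet (Tof v c0 A)) : ℤ) : K)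
          = ((2 * (εw * (4^(n-m) * 2^(m + (m+1)/2))) : ℤ) : K) := by
        rw [hJK]
        push_cast
        rw [pow_add (2:K) m ((m+1)/2), pow_add, pow_succ]
        ring
      have := intK_inj (x := 2 * Jchar (Dv v) (pairSet (Tof v c0 A)))
        (y := 2 * (εw * (4^(n-m) * 2^(m + (m+1)/2)))) (by push_cast at hK ⊢; exact hK)
      omega
  obtain ⟨ε, e, hε, he, hJ⟩ := key
  have hεc : ε = 1 ∨ ε = -1 := by
    have hmul : ε * ε = 1 := by linear_combination hε
    exact Int.isUnit_iff.mp (IsUnit.of_mul_eq_one ε hmul)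
  rw [rho_formula, hJ]
  have habs : |((ε * (4^(n-m) * 2^e) : ℤ) : ℚ)| = 4^(n-m) * 2^e := by
    push_cast
    rw [abs_mul]
    rcases hεc with rfl | rfl
    · simp only [Int.cast_one, abs_one, one_mul]
      rw [abs_of_nonneg (by positivity)]
    · simp only [Int.cast_neg, Int.cast_one, abs_neg, abs_one, one_mul]
      rw [abs_of_nonneg (by positivity)]
  rw [habs]
  rw [div_eq_div_iff (by positivity) (by positivity)]
  have hmn : m ≤ n := mv_le v
  rw [show (4:ℚ) = 2^2 by norm_num, ← pow_mul, ← pow_mul, one_mul, ← pow_add, ← pow_add]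
  congr 1
  omega

end Design


/-- Theorem 1: the design `D` generated by `(v, Iₙ)` has exactly 1 complete
word of length `k₂ = 2f₁+2f₃+2` and exactly `2/ρ² = 2·4^⌊(f₁+f₃)/2⌋` partial words of
length `k₁ = f₁+2f₂+f₃+1` with aliasing index `ρ = 2^{−⌊(f₁+f₃)/2⌋}`; every other
nonempty subset of columns has aliasing index 0. -/
theorem statement4 (n : ℕ) (v : Fin n → ZMod 4)
    (f1 f2 f3 : ℕ) (h1 : f1 = freq v 1) (h2 : f2 = freq v 2) (h3 : f3 = freq v 3)
    (k1 k2 : ℕ) (hk1 : k1 = f1 + 2 * f2 + f3 + 1) (hk2 : k2 = 2 * f1 + 2 * f3 + 2)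
    (p : ℚ) (hp : p = 1 / 2 ^ ((f1 + f3) / 2)) :
    ∃ S0 S1 : Finset (Finset (Fin (n + 1) × Fin 2)),
      S0.card = 1 ∧
      S1.card = 2 * 4 ^ ((f1 + f3) / 2) ∧
      Disjoint S0 S1 ∧
      (∀ s ∈ S0, s.card = k2 ∧ rho (Dv v) s = 1) ∧
      (∀ s ∈ S1, s.card = k1 ∧ rho (Dv v) s = p) ∧
      (∀ s : Finset (Fin (n + 1) × Fin 2),
        s.Nonempty → s ∉ S0 → s ∉ S1 → rho (Dv v) s = 0) := by
  subst h1 h2 h3 hk1 hk2 hp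
  refine ⟨{pairSet (Tc v)}, (Ev v).image (fun p => pairSet (Tof v p.1 p.2)),
    Finset.card_singleton _, ?_, ?_, ?_, ?_, ?_⟩
  · rw [Finset.card_image_of_injOn, card_Ev, freq_13]
    rintro ⟨pc, pA⟩ hp ⟨qc, qA⟩ hq h
    obtain ⟨hpA, _⟩ := (mem_Ev v pc pA).mp hp
    obtain ⟨hqA, _⟩ := (mem_Ev v qc qA).mp hq
    obtain ⟨hc, hA⟩ := Tof_inj v hpA hqA (toSet_inj h)
    simp only [Prod.mk.injEq]
    exact ⟨hc, hA⟩
  · rw [Finset.disjoint_left]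
    intro s hs hs1
    rw [Finset.mem_singleton] at hs
    obtain ⟨⟨c0, A⟩, _, heq⟩ := Finset.mem_image.mp hs1
    dsimp only at heq
    rw [hs] at heq
    have hT := toSet_inj heq
    have h0 := congrFun hT 0
    rw [Tof, Tc, Fin.cons_zero, Fin.cons_zero] at h0
    exact absurd h0 (by rcases fin2_cases c0 with rfl | rfl <;> decide)
  · intro s hs
    rw [Finset.mem_singleton] at hs
    subst hs
    refine ⟨?_, rho_word2 v⟩
    rw [card_word2, freq_13]
    ring
  · intro s hs
    obtain ⟨⟨c0, A⟩, hmem, heq⟩ := Finset.mem_image.mp hs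
    dsimp only at heq
    obtain ⟨hA, hcond⟩ := (mem_Ev v c0 A).mp hmem
    constructor
    · rw [← heq, card_word1, freq_13]
      ring
    · rw [← heq, rho_word1 v c0 A hA hcond, freq_13]
  · intro s hsne hs0 hs1
    rw [Finset.mem_singleton] at hs0
    have hs : pairSet (fib s) = s := toSet_fib s
    set T := fib s with hTdef
    suffices hJ : Jchar (Dv v) s = 0 by
      rw [rho_formula, hJ]
      simp
    have hJf := J_formula v T
    rw [hs] at hJf
    have conclude : (2:K) * ((Jchar (Dv v) s : ℤ) : K) = 0 → Jchar (Dv v) s = 0 := by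
      intro h
      have h2 := intK_inj (x := 2 * Jchar (Dv v) s) (y := 0) (by push_cast; exact h)
      omega
    have singleton_case : ∀ c0 : Fin 2, T 0 = {c0} → Jchar (Dv v) s = 0 := by
      intro c0 hT0
      by_cases hmatch : ∀ i : Fin n, T i.succ = shape (v i) True ∨ T i.succ = shape (v i) False
      · set A := univ.filter (fun i => (v i = 1 ∨ v i = 3) ∧ T i.succ = shape (v i) True)
          with hAdef
        have hA : A ⊆ Mv v := fun i hi =>
          Finset.mem_filter.mpr ⟨Finset.mem_univ i, (Finset.mem_filter.mp hi).2.1⟩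
        have hTshape : ∀ i : Fin n, T i.succ = shape (v i) (i ∈ A) := by
          intro i
          by_cases hAi : i ∈ A
          · rw [shape_congr_true _ _ hAi]
            exact (Finset.mem_filter.mp hAi).2.2
          · rw [shape_congr_false _ _ hAi]
            rcases hmatch i with h | h
            · have hodd : ¬(v i = 1 ∨ v i = 3) := fun ho =>
                hAi (Finset.mem_filter.mpr ⟨Finset.mem_univ i, ho, h⟩)
              rw [h]
              rcases zmod4_cases (v i) with hv | hv | hv | hv
              · rw [hv]; decide
              · exact absurd (Or.inl hv) hodd
              · rw [hv]; decide
              · exact absurd (Or.inr hv) hodd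
            · exact h
        have hTT : T = Tof v c0 A := by
          funext j
          refine Fin.cases ?_ ?_ j
          · rw [hT0, Tof, Fin.cons_zero]
          · intro i
            rw [Tof, Fin.cons_succ]
            exact hTshape i
        by_cases hcond : condE v c0 A
        · exact absurd (Finset.mem_image.mpr
            ⟨(c0, A), (mem_Ev v c0 A).mpr ⟨hA, hcond⟩, by rw [← hTT]; exact hs⟩) hs1
        · unfold condE at hcond
          push_neg at hcond
          obtain ⟨hm, hzm⟩ := hcond
          have hcard : A.card ≤ (Mv v).card := Finset.card_le_card hA
          have hc0 : c0.val ≤ 1 := by omega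
          have hα : A.card + c0.val ≤ (Mv v).card + 1 := by omega
          have hW0 := (Wg_eval (A.card + c0.val) ((Mv v).card + 1 - (A.card + c0.val))).2.2
            (by rw [show A.card + c0.val + ((Mv v).card + 1 - (A.card + c0.val))
                  = (Mv v).card + 1 by omega]
                exact Nat.even_add_one.mpr hm)
            (fun hc => hzm ((alpha_iff (Mv v).card (A.card + c0.val) hα).mp hc))
          have hJp := J_partial v c0 A hA
          rw [← hTT, hs] at hJp
          apply conclude
          rw [hJp, hW0, mul_zero]
      · push_neg at hmatch
        obtain ⟨i0, hne1, hne2⟩ := hmatch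
        obtain ⟨hB1, hB3⟩ := Bvanish (v i0) (T i0.succ) hne1 hne2
        apply conclude
        rw [hJf, sum_zmod4, hT0]
        have hcc0 : cc ({c0} : Finset (Fin 2)) 0 = 0 ∧ cc ({c0} : Finset (Fin 2)) 2 = 0 := by
          rcases fin2_cases c0 with rfl | rfl <;> exact ⟨by decide, by decide⟩
        have hP1 : ∏ i, B ((1:ZMod 4) * v i) (T i.succ) = 0 :=
          Finset.prod_eq_zero (Finset.mem_univ i0) hB1
        have hP3 : ∏ i, B ((3:ZMod 4) * v i) (T i.succ) = 0 :=
          Finset.prod_eq_zero (Finset.mem_univ i0) hB3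
        rw [hcc0.1, hcc0.2, hP1, hP3]
        ring
    rcases finset2_cases (T 0) with hT0 | hT0 | hT0 | hT0
    · by_cases htriv : ∀ j, T j = ∅
      · have hse : s = ∅ := by
          rw [← hs]
          exact (toSet_empty_iff T).mpr htriv
        exact absurd hse (Finset.nonempty_iff_ne_empty.mp hsne)
      · push_neg at htriv
        obtain ⟨j, hj⟩ := htriv
        have hjne : j ≠ 0 := fun h => hj.ne_empty (h ▸ hT0)
        obtain ⟨i, rfl⟩ := Fin.eq_succ_of_ne_zero hjne
        apply conclude
        rw [hJf, sum_zmod4, hT0]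
        have hccE : cc (∅ : Finset (Fin 2)) 0 = 2 ∧ cc (∅ : Finset (Fin 2)) 1 = 0 ∧
            cc (∅ : Finset (Fin 2)) 2 = 0 ∧ cc (∅ : Finset (Fin 2)) 3 = 0 := by decide
        have hP : ∏ i', B ((0:ZMod 4) * v i') (T i'.succ) = 0 := by
          apply Finset.prod_eq_zero (Finset.mem_univ i)
          rw [zero_mul, B0val, if_neg hj.ne_empty]
        rw [hccE.1, hccE.2.1, hccE.2.2.1, hccE.2.2.2, hP]
        ring
    · exact singleton_case 0 hT0
    · exact singleton_case 1 hT0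
    · by_cases hall : ∀ i : Fin n,
          T i.succ = (if v i = 1 ∨ v i = 3 then ({0,1} : Finset (Fin 2)) else ∅)
      · have hTT : T = Tc v := by
          funext j
          refine Fin.cases ?_ ?_ j
          · rw [hT0, Tc, Fin.cons_zero]
          · intro i
            rw [Tc, Fin.cons_succ]
            exact hall i
        exact absurd (by rw [← hs, hTT] : s = pairSet (Tc v)) hs0
      · push_neg at hall
        obtain ⟨i0, hi0⟩ := hall
        apply conclude
        rw [hJf, sum_zmod4, hT0]
        have hccP : cc ({0,1} : Finset (Fin 2)) 0 = 0 ∧ cc ({0,1} : Finset (Fin 2)) 1 = 0 ∧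
            cc ({0,1} : Finset (Fin 2)) 2 = 2 ∧ cc ({0,1} : Finset (Fin 2)) 3 = 0 := by decide
        have hP : ∏ i, B ((2:ZMod 4) * v i) (T i.succ) = 0 := by
          apply Finset.prod_eq_zero (Finset.mem_univ i0)
          rw [B2val, if_neg hi0]
        rw [hccP.1, hccP.2.1, hccP.2.2.1, hccP.2.2.2, hP]
        ring
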